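/- Every A_k-monochromatic tiling of V has average-case objective PAR at most 2^{k+1}/3 + 1/(3·2^k), and the tiling of V into singleton cells (induced by the sealed-bid auction) is A_k-monochromatic and achieves average-case objective PAR exactly 2^{k+1}/3 + 1/(3·2^k). -/

import Mathlib

open Finset

/-- The value space `{0,…,2^k−1} × {0,…,2^k−1}`. -/
def Vk (k : ℕ) : Finset (ℕ × ℕ) := Finset.range (2 ^ k) ×ˢ Finset.range (2 ^ k)

/-- A tiling of `Vk k`: a finite collection of nonempty rectangles partitioning `Vk k`. -/
def IsTiling (k : ℕ) (T : Finset (Finset (ℕ × ℕ))) : Prop :=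
  (∀ R ∈ T, ∃ S S' : Finset ℕ, R = S ×ˢ S') ∧
    (∀ R ∈ T, R.Nonempty) ∧ (∀ R ∈ T, R ⊆ Vk k) ∧ ∀ x ∈ Vk k, ∃! R, R ∈ T ∧ x ∈ R

/-- `f`-monochromaticity of a tiling. -/
def Mono {β : Type} (f : ℕ × ℕ → β) (T : Finset (Finset (ℕ × ℕ))) : Prop :=
  ∀ R ∈ T, ∀ x ∈ R, ∀ y ∈ R, f x = f y

/-- The tile of `T` containing `x` (union of all tiles containing `x`; for a
tiling this is exactly the unique tile containing `x`). -/
def tileOf (T : Finset (Finset (ℕ × ℕ))) (x : ℕ × ℕ) : Finset (ℕ × ℕ) :=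
  (T.filter fun R => x ∈ R).sup id

/-- The ideal region of `x`: the level set of `f x` inside `Vk k`. -/
def ideal {β : Type} [DecidableEq β] (k : ℕ) (f : ℕ × ℕ → β) (x : ℕ × ℕ) : Finset (ℕ × ℕ) :=
  (Vk k).filter fun y => f y = f x

/-- Average-case objective PAR of a tiling w.r.t. the uniform distribution. -/
def avgObjPAR {β : Type} [DecidableEq β] (k : ℕ) (f : ℕ × ℕ → β)
    (T : Finset (Finset (ℕ × ℕ))) : ℚ :=
  (∑ x ∈ Vk k, ((ideal k f x).card : ℚ) / ((tileOf T x).card : ℚ)) / 2 ^ (2 * k)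

/-- Average-case PAR with respect to party 1. -/
def avgPAR1 {β : Type} [DecidableEq β] (k : ℕ) (f : ℕ × ℕ → β)
    (T : Finset (Finset (ℕ × ℕ))) : ℚ :=
  (∑ x ∈ Vk k,
      (((Finset.range (2 ^ k)).filter fun y => f (x.1, y) = f x).card : ℚ) /
        (((Finset.range (2 ^ k)).filter fun y => (x.1, y) ∈ tileOf T x).card : ℚ)) /
    2 ^ (2 * k)

/-- Average-case PAR with respect to party 2. -/
def avgPAR2 {β : Type} [DecidableEq β] (k : ℕ) (f : ℕ × ℕ → β)
    (T : Finset (Finset (ℕ × ℕ))) : ℚ :=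
  (∑ x ∈ Vk k,
      (((Finset.range (2 ^ k)).filter fun y => f (y, x.2) = f x).card : ℚ) /
        (((Finset.range (2 ^ k)).filter fun y => (y, x.2) ∈ tileOf T x).card : ℚ)) /
    2 ^ (2 * k)

/-- The millionaires function: `1` if `x1 ≥ x2`, else `2`. -/
def Mil (x : ℕ × ℕ) : ℕ := if x.2 ≤ x.1 then 1 else 2

/-- The second-price auction function. -/
def Auc (x : ℕ × ℕ) : ℕ × ℕ := if x.2 ≤ x.1 then (1, x.2) else (2, x.1)

/-- Translate a tile by `(a, a)`. -/
def shiftTile (a : ℕ) (R : Finset (ℕ × ℕ)) : Finset (ℕ × ℕ) :=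
  R.image fun p => (p.1 + a, p.2 + a)

/-- The bisection-protocol tiling `B_k`. -/
def Btile : ℕ → Finset (Finset (ℕ × ℕ))
  | 0 => {{(0, 0)}}
  | j + 1 =>
    Btile j ∪ (Btile j).image (shiftTile (2 ^ j)) ∪
      {Finset.range (2 ^ j) ×ˢ Finset.Ico (2 ^ j) (2 ^ (j + 1)),
        Finset.Ico (2 ^ j) (2 ^ (j + 1)) ×ˢ Finset.range (2 ^ j)}

/-- The bounded-bisection-auction tiling `T_{c,i}`. -/
def BBA : ℕ → ℕ → Finset (Finset (ℕ × ℕ))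
  | 0, i =>
    (Finset.range (2 ^ i)).image (fun p => Finset.Ico p (2 ^ i) ×ˢ ({p} : Finset ℕ)) ∪
      (Finset.range (2 ^ i - 1)).image fun p => ({p} : Finset ℕ) ×ˢ Finset.Ico (p + 1) (2 ^ i)
  | c + 1, i =>
    BBA c i ∪ (BBA c i).image (shiftTile (2 ^ (c + i))) ∪
      (Finset.range (2 ^ (c + i))).image
        (fun j => Finset.Ico (2 ^ (c + i)) (2 ^ (c + i + 1)) ×ˢ ({j} : Finset ℕ)) ∪
      (Finset.range (2 ^ (c + i))).image fun j =>
        ({j} : Finset ℕ) ×ˢ Finset.Ico (2 ^ (c + i)) (2 ^ (c + i + 1))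

/-- The public-good function: `true` iff `x1 + x2 ≥ 2^k − 1` ("Build"). -/
def PG (k : ℕ) (x : ℕ × ℕ) : Bool := decide (2 ^ k - 1 ≤ x.1 + x.2)

/-- The truthful public-good function: `none` = "Do Not Build". -/
def TPG (c : ℕ) (x : ℕ × ℕ) : Option (ℕ × ℕ) :=
  if x.1 + x.2 < c then none else some (c - x.2, c - x.1)

/-- The tiling of `Vk k` into singleton cells (sealed-bid auction). -/
def sealedTiling (k : ℕ) : Finset (Finset (ℕ × ℕ)) :=
  (Vk k).image fun x => ({x} : Finset (ℕ × ℕ))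


lemma vk_mem {k : ℕ} {x : ℕ × ℕ} : x ∈ Vk k ↔ x.1 < 2 ^ k ∧ x.2 < 2 ^ k := by
  simp [Vk, Finset.mem_product]

lemma ideal_card (k : ℕ) (x : ℕ × ℕ) (hx : x ∈ Vk k) :
    (ideal k Auc x).card = if x.2 ≤ x.1 then 2 ^ k - x.2 else 2 ^ k - x.1 - 1 := by
  have hx' := vk_mem.mp hx
  by_cases h : x.2 ≤ x.1
  · rw [if_pos h]
    have he : ideal k Auc x = Finset.Ico x.2 (2 ^ k) ×ˢ {x.2} := by
      ext y
      simp only [ideal, Vk, Finset.mem_filter, Finset.mem_product, Finset.mem_range,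
        Finset.mem_Ico, Finset.mem_singleton, Auc, Prod.ext_iff]
      rw [if_pos h]
      split_ifs with h2 <;> simp <;> omega
    rw [he]
    simp [Nat.card_Ico]
  · rw [if_neg h]
    have he : ideal k Auc x = ({x.1} : Finset ℕ) ×ˢ Finset.Ico (x.1 + 1) (2 ^ k) := by
      ext y
      simp only [ideal, Vk, Finset.mem_filter, Finset.mem_product, Finset.mem_range,
        Finset.mem_Ico, Finset.mem_singleton, Auc, Prod.ext_iff]
      rw [if_neg h]
      split_ifs with h2 <;> simp <;> omega
    rw [he]
    simp [Nat.card_Ico]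
    omega

lemma sealed_tileOf (k : ℕ) (x : ℕ × ℕ) (hx : x ∈ Vk k) :
    tileOf (sealedTiling k) x = {x} := by
  have hf : (sealedTiling k).filter (fun R => x ∈ R) = {({x} : Finset (ℕ × ℕ))} := by
    ext R
    simp only [sealedTiling, Finset.mem_filter, Finset.mem_image, Finset.mem_singleton]
    constructor
    · rintro ⟨⟨y, hy, rfl⟩, hxR⟩
      simp only [Finset.mem_singleton] at hxR
      subst hxR; rfl
    · rintro rfl
      exact ⟨⟨x, hx, rfl⟩, Finset.mem_singleton_self x⟩
  rw [tileOf, hf, Finset.sup_singleton]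
  rfl

lemma sealed_isTiling (k : ℕ) : IsTiling k (sealedTiling k) := by
  refine ⟨?_, ?_, ?_, ?_⟩
  · rintro R hR
    simp only [sealedTiling, Finset.mem_image] at hR
    obtain ⟨y, hy, rfl⟩ := hR
    exact ⟨{y.1}, {y.2}, by simp⟩
  · rintro R hR
    simp only [sealedTiling, Finset.mem_image] at hR
    obtain ⟨y, _, rfl⟩ := hR
    exact ⟨y, Finset.mem_singleton_self y⟩
  · rintro R hR
    simp only [sealedTiling, Finset.mem_image] at hR
    obtain ⟨y, hy, rfl⟩ := hR
    intro z hz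
    simp only [Finset.mem_singleton] at hz
    subst hz; exact hy
  · intro x hx
    refine ⟨{x}, ⟨Finset.mem_image_of_mem _ hx, Finset.mem_singleton_self x⟩, ?_⟩
    rintro R ⟨hR, hxR⟩
    simp only [sealedTiling, Finset.mem_image] at hR
    obtain ⟨y, _, rfl⟩ := hR
    simp only [Finset.mem_singleton] at hxR
    subst hxR; rfl

lemma sealed_mono : Mono Auc (sealedTiling k) := by
  intro R hR x hx y hy
  simp only [sealedTiling, Finset.mem_image] at hR
  obtain ⟨z, _, rfl⟩ := hR
  simp only [Finset.mem_singleton] at hx hy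
  subst hx; subst hy; rfl

lemma tile_mem {k : ℕ} {T : Finset (Finset (ℕ × ℕ))} (hT : IsTiling k T) {x : ℕ × ℕ}
    (hx : x ∈ Vk k) : x ∈ tileOf T x := by
  obtain ⟨R, ⟨hRT, hxR⟩, _⟩ := hT.2.2.2 x hx
  exact Finset.le_sup (f := id) (Finset.mem_filter.mpr ⟨hRT, hxR⟩) hxR

lemma sum_q1 (n : ℕ) : ∑ i ∈ Finset.range n, (i : ℚ) = n * (n - 1) / 2 := by
  induction n with
  | zero => simp
  | succ m ih => rw [Finset.sum_range_succ, ih]; push_cast; ring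

lemma sum_q2 (n : ℕ) : ∑ i ∈ Finset.range n, (i : ℚ) ^ 2 = n * (n - 1) * (2 * n - 1) / 6 := by
  induction n with
  | zero => simp
  | succ m ih => rw [Finset.sum_range_succ, ih]; push_cast; ring

lemma sum_ideal (k : ℕ) :
    ∑ x ∈ Vk k, ((ideal k Auc x).card : ℚ)
      = (2 * ((2 ^ k : ℕ) : ℚ) ^ 3 + ((2 ^ k : ℕ) : ℚ)) / 3 := by
  have key : ∀ x ∈ Vk k, ((ideal k Auc x).card : ℚ)
      = if x.2 ≤ x.1 then ((2 ^ k : ℕ) : ℚ) - x.2 else ((2 ^ k : ℕ) : ℚ) - x.1 - 1 := by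
    intro x hx
    have hx' := vk_mem.mp hx
    rw [ideal_card k x hx]
    split_ifs with h
    · rw [Nat.cast_sub (le_of_lt hx'.2)]
    · have h2 : (2:ℕ) ^ k - x.1 - 1 = 2 ^ k - (x.1 + 1) := by omega
      rw [h2, Nat.cast_sub (by omega : x.1 + 1 ≤ 2 ^ k)]
      push_cast; ring
  rw [Finset.sum_congr rfl key]
  show ∑ x ∈ Finset.range (2 ^ k) ×ˢ Finset.range (2 ^ k),
      (if x.2 ≤ x.1 then ((2 ^ k : ℕ) : ℚ) - x.2 else ((2 ^ k : ℕ) : ℚ) - x.1 - 1)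
    = (2 * ((2 ^ k : ℕ) : ℚ) ^ 3 + ((2 ^ k : ℕ) : ℚ)) / 3
  rw [Finset.sum_product]
  have inner : ∀ i ∈ Finset.range (2 ^ k),
      (∑ j ∈ Finset.range (2 ^ k), (if (i, j).2 ≤ (i, j).1 then ((2 ^ k : ℕ) : ℚ) - (i, j).2
          else ((2 ^ k : ℕ) : ℚ) - (i, j).1 - 1))
        = (1 / 2) * (i : ℚ) ^ 2 + (3 / 2 - ((2 ^ k : ℕ) : ℚ)) * i + (((2 ^ k : ℕ) : ℚ) ^ 2 - ((2 ^ k : ℕ) : ℚ) + 1) := by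
    intro i hi
    rw [Finset.mem_range] at hi
    have hsplit : Finset.range (2 ^ k) = Finset.range (i + 1) ∪ Finset.Ico (i + 1) (2 ^ k) := by
      rw [Finset.range_eq_Ico, Finset.range_eq_Ico, Finset.Ico_union_Ico_eq_Ico (Nat.zero_le _) (show i + 1 ≤ 2 ^ k by omega)]
    rw [hsplit, Finset.sum_union (by
      simp only [Finset.range_eq_Ico]
      exact Finset.Ico_disjoint_Ico_consecutive 0 (i + 1) (2 ^ k))]
    have e1 : ∀ j ∈ Finset.range (i + 1),
        (if (i, j).2 ≤ (i, j).1 then ((2 ^ k : ℕ) : ℚ) - (i, j).2 else ((2 ^ k : ℕ) : ℚ) - (i, j).1 - 1)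
          = ((2 ^ k : ℕ) : ℚ) - j := by
      intro j hj
      rw [Finset.mem_range] at hj
      exact if_pos (by omega)
    have e2 : ∀ j ∈ Finset.Ico (i + 1) (2 ^ k),
        (if (i, j).2 ≤ (i, j).1 then ((2 ^ k : ℕ) : ℚ) - (i, j).2 else ((2 ^ k : ℕ) : ℚ) - (i, j).1 - 1)
          = ((2 ^ k : ℕ) : ℚ) - i - 1 := by
      intro j hj
      rw [Finset.mem_Ico] at hj
      exact if_neg (by omega)
    rw [Finset.sum_congr rfl e1, Finset.sum_congr rfl e2, Finset.sum_sub_distrib,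
      Finset.sum_const, Finset.sum_const, sum_q1, Finset.card_range, Nat.card_Ico,
      nsmul_eq_mul, nsmul_eq_mul, Nat.cast_sub (by omega : i + 1 ≤ 2 ^ k)]
    push_cast
    ring
  rw [Finset.sum_congr rfl inner, Finset.sum_add_distrib, Finset.sum_add_distrib,
    ← Finset.mul_sum, ← Finset.mul_sum, sum_q1, sum_q2, Finset.sum_const,
    Finset.card_range, nsmul_eq_mul]
  push_cast
  ring

lemma sum_ideal_div (k : ℕ) :
    (∑ x ∈ Vk k, ((ideal k Auc x).card : ℚ)) / 2 ^ (2 * k)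
      = (2 ^ (k + 1) : ℚ) / 3 + 1 / (3 * 2 ^ k) := by
  rw [sum_ideal]
  have h2 : ((2 ^ k : ℕ) : ℚ) = 2 ^ k := by push_cast; ring
  rw [h2]
  have hne : (2 : ℚ) ^ k ≠ 0 := pow_ne_zero _ (by norm_num)
  rw [two_mul, pow_add]
  field_simp
  ring

lemma sealed_avg (k : ℕ) :
    avgObjPAR k Auc (sealedTiling k) = (2 ^ (k + 1) : ℚ) / 3 + 1 / (3 * 2 ^ k) := by
  rw [avgObjPAR, ← sum_ideal_div k]
  congr 1
  refine Finset.sum_congr rfl fun x hx => ?_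
  rw [sealed_tileOf k x hx]
  simp

/-- every `A_k`-monochromatic tiling of `V` has average-case
objective PAR at most `2^{k+1}/3 + 1/(3·2^k)`, and the tiling into singleton
cells (sealed-bid auction) is `A_k`-monochromatic and achieves exactly this. -/
theorem stmt18 (k : ℕ) (hk : 1 ≤ k) :
    (∀ T : Finset (Finset (ℕ × ℕ)), IsTiling k T → Mono Auc T →
        avgObjPAR k Auc T ≤ (2 ^ (k + 1) : ℚ) / 3 + 1 / (3 * 2 ^ k)) ∧
      IsTiling k (sealedTiling k) ∧ Mono Auc (sealedTiling k) ∧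
      avgObjPAR k Auc (sealedTiling k) = (2 ^ (k + 1) : ℚ) / 3 + 1 / (3 * 2 ^ k) := by
  refine ⟨?_, sealed_isTiling k, sealed_mono, sealed_avg k⟩
  intro T hT _
  rw [← sum_ideal_div k, avgObjPAR]
  have h2k : (0 : ℚ) < 2 ^ (2 * k) := by positivity
  rw [div_le_div_iff_of_pos_right h2k]
  refine Finset.sum_le_sum fun x hx => ?_
  have hmem := tile_mem hT hx
  have hpos : 0 < (tileOf T x).card := Finset.card_pos.mpr ⟨x, hmem⟩
  exact div_le_self (by positivity) (by exact_mod_cast hpos)
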